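/- Let τ be a nonempty index set, φ : τ → τ a self-map, and w : τ → ℂ a weight vector. If the weighted generalized shift σ_{φ,w} maps ℓ²(τ) into ℓ²(τ), then its restriction σ_{φ,w}|_{ℓ²(τ)} : ℓ²(τ) → ℓ²(τ) is a continuous (bounded) linear operator. -/

import Mathlib

open Filter Topology

/-- If the weighted generalized shift `σ_{φ,w}` maps `ℓ²(τ)` into `ℓ²(τ)`,
then its restriction to `ℓ²(τ)` is a continuous (bounded) linear operator. -/
theorem weighted_shift_restriction_continuous {τ : Type*} [Nonempty τ] (φ : τ → τ) (w : τ → ℂ)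
    (h : ∀ x : τ → ℂ, Memℓp x 2 → Memℓp (fun α => w α * x (φ α)) 2) :
    ∃ T : lp (fun _ : τ => ℂ) 2 →L[ℂ] lp (fun _ : τ => ℂ) 2,
      ∀ (x : lp (fun _ : τ => ℂ) 2) (α : τ), T x α = w α * x (φ α) := by
  set L : lp (fun _ : τ => ℂ) 2 →ₗ[ℂ] lp (fun _ : τ => ℂ) 2 :=
    { toFun := fun x => ⟨fun α => w α * x (φ α), h x (lp.memℓp x)⟩
      map_add' := by
        intro x y
        ext α
        simp [mul_add]
        rfl
      map_smul' := by
        intro c x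
        ext α
        simp [mul_comm, mul_assoc, mul_left_comm] } with hL
  -- coordinate evaluation is continuous on lp
  have hcoord : ∀ α : τ, Continuous fun x : lp (fun _ : τ => ℂ) 2 => x α := by
    intro α
    refine (LipschitzWith.mk_one ?_).continuous
    intro x y
    have := lp.norm_apply_le_norm (by norm_num : (2 : ENNReal) ≠ 0) (x - y) α
    simpa [dist_eq_norm] using this
  have hcont : Continuous L := by
    refine L.continuous_of_seq_closed_graph ?_
    intro u x y hu hLu
    ext α
    have h1 : Tendsto (fun n => (L (u n) : τ → ℂ) α) atTop (𝓝 (y α)) :=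
      ((hcoord α).tendsto y).comp hLu
    have h2 : Tendsto (fun n => w α * (u n : τ → ℂ) (φ α)) atTop
        (𝓝 (w α * (x : τ → ℂ) (φ α))) :=
      (((hcoord (φ α)).tendsto x).comp hu).const_mul _
    have h3 : (fun n => (L (u n) : τ → ℂ) α) = fun n => w α * (u n : τ → ℂ) (φ α) := rfl
    rw [h3] at h1
    have := tendsto_nhds_unique h1 h2
    simpa [hL] using this
  exact ⟨⟨L, hcont⟩, fun x α => rfl⟩
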